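/- Let g : ℝⁿ × Ω → ℝ be convex and continuously differentiable in its first argument and measurable in the second, with E|g(0,·)| < ∞, and suppose there is a nonnegative random variable η with Eη² < ∞ such that |g(u,ω) − g(v,ω)| ≤ η(ω)|u − v| a.s. for all u, v ∈ ℝⁿ. Then f(x) := E g(x(ω), ω) is a well-defined real-valued convex function on L²(Ω,F,ℝⁿ), it is Gâteaux differentiable, and its Gâteaux derivative at x is the random vector ω ↦ ∇_x g(x(ω), ω). -/

import Mathlib

open MeasureTheory RealInnerProductSpace Filter

open scoped ENNReal

section Aux
variable {Ω : Type*} {n : ℕ} {mF : MeasurableSpace Ω} {μ : Measure Ω}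

local notation "E" => EuclideanSpace ℝ (Fin n)

lemma aux_ae_lip (g : E → Ω → ℝ)
    (hC1 : ∀ ω, ContDiff ℝ 1 (fun u => g u ω)) (η : Ω → ℝ)
    (hLip : ∀ u v : E, ∀ᵐ ω ∂μ, |g u ω - g v ω| ≤ η ω * ‖u - v‖) :
    ∀ᵐ ω ∂μ, ∀ u v : E, |g u ω - g v ω| ≤ η ω * ‖u - v‖ := by
  obtain ⟨s, hs_count, hs_dense⟩ := TopologicalSpace.exists_countable_dense E
  have h1 : ∀ᵐ ω ∂μ, ∀ u ∈ s, ∀ v ∈ s, |g u ω - g v ω| ≤ η ω * ‖u - v‖ := by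
    rw [ae_ball_iff hs_count]
    intro u hu
    rw [ae_ball_iff hs_count]
    intro v hv
    exact hLip u v
  filter_upwards [h1] with ω hω u v
  have hcl : IsClosed {p : E × E | |g p.1 ω - g p.2 ω| ≤ η ω * ‖p.1 - p.2‖} := by
    apply isClosed_le
    · exact (((hC1 ω).continuous.comp continuous_fst).sub
        ((hC1 ω).continuous.comp continuous_snd)).abs
    · exact continuous_const.mul ((continuous_fst.sub continuous_snd).norm)
  have hdense : Dense (s ×ˢ s : Set (E × E)) := hs_dense.prod hs_dense
  have : (s ×ˢ s : Set (E × E)) ⊆ {p : E × E | |g p.1 ω - g p.2 ω| ≤ η ω * ‖p.1 - p.2‖} :=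
    fun p hp => hω p.1 hp.1 p.2 hp.2
  have huniv : closure (s ×ˢ s : Set (E × E)) ⊆ {p | |g p.1 ω - g p.2 ω| ≤ η ω * ‖p.1 - p.2‖} :=
    hcl.closure_subset_iff.2 this
  exact huniv (by rw [hdense.closure_eq]; trivial : ((u, v) : E × E) ∈ closure (s ×ˢ s))

end Aux
section Aux2
variable {Ω : Type*} {n : ℕ} {mF : MeasurableSpace Ω} {μ : Measure Ω}
local notation "E" => EuclideanSpace ℝ (Fin n)

lemma aux_meas_comp (g : E → Ω → ℝ)
    (hC1 : ∀ ω, ContDiff ℝ 1 (fun u => g u ω))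
    (hmeas : ∀ u, Measurable (fun ω => g u ω))
    {x : Ω → E} (hx : Measurable x) : Measurable (fun ω => g (x ω) ω) := by
  have huncur : Measurable (Function.uncurry g) :=
    measurable_uncurry_of_continuous_of_measurable (fun ω => (hC1 ω).continuous) hmeas
  exact huncur.comp (hx.prodMk measurable_id)

lemma aux_grad_meas (g : E → Ω → ℝ)
    (hC1 : ∀ ω, ContDiff ℝ 1 (fun u => g u ω))
    (hmeas : ∀ u, Measurable (fun ω => g u ω))
    {x : Ω → E} (hx : Measurable x) :
    Measurable (fun ω => gradient (fun u => g u ω) (x ω)) := by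
  -- coordinates of gradient are limits of difference quotients
  have b := EuclideanSpace.basisFun (Fin n) ℝ
  have hcoord : ∀ i : Fin n, Measurable (fun ω =>
      fderiv ℝ (fun u => g u ω) (x ω) (EuclideanSpace.single i 1)) := by
    intro i
    set e : E := EuclideanSpace.single i 1 with he
    have hlim : ∀ ω, Tendsto (fun k : ℕ =>
        (g (x ω + ((k:ℝ)+1)⁻¹ • e) ω - g (x ω) ω) / ((k:ℝ)+1)⁻¹) atTop
        (nhds (fderiv ℝ (fun u => g u ω) (x ω) e)) := by
      intro ω
      have hdiff : HasFDerivAt (fun u => g u ω) (fderiv ℝ (fun u => g u ω) (x ω)) (x ω) :=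
        ((hC1 ω).differentiable one_ne_zero).differentiableAt.hasFDerivAt
      have hcurve : HasDerivAt (fun t : ℝ => x ω + t • e) e 0 := by
        simpa using ((hasDerivAt_id (0:ℝ)).smul_const e).const_add (x ω)
      have hdiff' : HasFDerivAt (fun u => g u ω) (fderiv ℝ (fun u => g u ω) (x ω))
          (x ω + (0:ℝ) • e) := by simpa using hdiff
      have hcomp : HasDerivAt (fun t : ℝ => g (x ω + t • e) ω)
          (fderiv ℝ (fun u => g u ω) (x ω) e) 0 := by
        simpa [Function.comp_def] using hdiff'.comp_hasDerivAt 0 hcurve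
      have hslope := hasDerivAt_iff_tendsto_slope.1 hcomp
      have hseq : Tendsto (fun k : ℕ => ((k:ℝ)+1)⁻¹) atTop (nhdsWithin 0 {(0:ℝ)}ᶜ) := by
        apply tendsto_nhdsWithin_of_tendsto_nhds_of_eventually_within
        · simpa only [one_div] using tendsto_one_div_add_atTop_nhds_zero_nat (𝕜 := ℝ)
        · filter_upwards with k
          simp only [Set.mem_compl_iff, Set.mem_singleton_iff]
          positivity
      have := hslope.comp hseq
      convert this using 2 with k
      simp [slope_def_field, div_eq_inv_mul]
    have hterm : ∀ k : ℕ, Measurable (fun ω =>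
        (g (x ω + ((k:ℝ)+1)⁻¹ • e) ω - g (x ω) ω) / ((k:ℝ)+1)⁻¹) := by
      intro k
      have h1 : Measurable (fun ω => g (x ω + ((k:ℝ)+1)⁻¹ • e) ω) :=
        aux_meas_comp g hC1 hmeas (hx.add_const _)
      exact (h1.sub (aux_meas_comp g hC1 hmeas hx)).div_const _
    exact measurable_of_tendsto_metrizable hterm (tendsto_pi_nhds.2 hlim)
  have hrepr : (fun ω => gradient (fun u => g u ω) (x ω)) = fun ω =>
      ∑ i : Fin n, (fderiv ℝ (fun u => g u ω) (x ω) (EuclideanSpace.single i 1)) •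
        (EuclideanSpace.single i 1 : E) := by
    funext ω
    have key : ∀ v : E, fderiv ℝ (fun u => g u ω) (x ω) v =
        ⟪gradient (fun u => g u ω) (x ω), v⟫ := by
      intro v
      rw [gradient, InnerProductSpace.toDual_symm_apply]
    have hb := (EuclideanSpace.basisFun (Fin n) ℝ).sum_repr
      (gradient (fun u => g u ω) (x ω))
    rw [← hb]
    apply Finset.sum_congr rfl
    intro i _
    rw [EuclideanSpace.basisFun_repr, EuclideanSpace.basisFun_apply, key,
      real_inner_comm, EuclideanSpace.inner_single_left]
    simp
  rw [hrepr]
  exact Finset.measurable_sum _ fun i _ => (hcoord i).smul_const _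

end Aux2
section Aux3
variable {Ω : Type*} {n : ℕ}
local notation "E" => EuclideanSpace ℝ (Fin n)

lemma aux_grad_bound (g : E → Ω → ℝ) {η : Ω → ℝ} {ω : Ω}
    (hω : ∀ u v : E, |g u ω - g v ω| ≤ η ω * ‖u - v‖) (hηnn : 0 ≤ η ω) (u : E) :
    ‖gradient (fun u => g u ω) u‖ ≤ η ω := by
  have hlip : LipschitzWith (η ω).toNNReal (fun u => g u ω) := by
    apply LipschitzWith.of_dist_le_mul
    intro a b
    rw [Real.dist_eq, Real.coe_toNNReal _ hηnn, dist_eq_norm]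
    exact hω a b
  have hf := norm_fderiv_le_of_lipschitz (𝕜 := ℝ) (x₀ := u) hlip
  rw [gradient, LinearIsometryEquiv.norm_map]
  rwa [Real.coe_toNNReal _ hηnn] at hf

end Aux3
/-- For a convex integrand `g`, continuously differentiable in its first variable,
measurable in the second, with an `L²` Lipschitz modulus `η`, the expectation functional
`f(x) = E g(x(ω), ω)` is well defined (the integrand is integrable), convex on `L²`, and
Gâteaux differentiable with derivative `ω ↦ ∇_x g(x(ω), ω)`, which belongs to `L²`. -/
theorem expectation_functional_gateaux
    {Ω : Type*} {n : ℕ} {mF : MeasurableSpace Ω} {μ : Measure Ω} [IsProbabilityMeasure μ]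
    (g : EuclideanSpace ℝ (Fin n) → Ω → ℝ)
    (hconv : ∀ ω, ConvexOn ℝ Set.univ (fun u => g u ω))
    (hC1 : ∀ ω, ContDiff ℝ 1 (fun u => g u ω))
    (hmeas : ∀ u, Measurable (fun ω => g u ω))
    (hg0 : Integrable (fun ω => g 0 ω) μ)
    (η : Ω → ℝ) (hηmeas : Measurable η) (hηnn : ∀ ω, 0 ≤ η ω) (hη2 : MemLp η 2 μ)
    (hLip : ∀ u v : EuclideanSpace ℝ (Fin n),
      ∀ᵐ ω ∂μ, |g u ω - g v ω| ≤ η ω * ‖u - v‖) :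
    (∀ x : Ω → EuclideanSpace ℝ (Fin n), MemLp x 2 μ →
        Integrable (fun ω => g (x ω) ω) μ) ∧
    (∀ x y : Ω → EuclideanSpace ℝ (Fin n), MemLp x 2 μ → MemLp y 2 μ →
        ∀ t : ℝ, 0 ≤ t → t ≤ 1 →
        (∫ ω, g (t • x ω + (1 - t) • y ω) ω ∂μ) ≤
          t * (∫ ω, g (x ω) ω ∂μ) + (1 - t) * (∫ ω, g (y ω) ω ∂μ)) ∧
    (∀ x : Ω → EuclideanSpace ℝ (Fin n), MemLp x 2 μ →
        MemLp (fun ω => gradient (fun u => g u ω) (x ω)) 2 μ) ∧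
    (∀ x d : Ω → EuclideanSpace ℝ (Fin n), MemLp x 2 μ → MemLp d 2 μ →
        Tendsto
          (fun t : ℝ =>
            ((∫ ω, g (x ω + t • d ω) ω ∂μ) - ∫ ω, g (x ω) ω ∂μ) / t)
          (nhdsWithin 0 (Set.Ioi 0))
          (nhds (∫ ω, ⟪gradient (fun u => g u ω) (x ω), d ω⟫ ∂μ))) := by
  have hULip : ∀ᵐ ω ∂μ, ∀ u v : EuclideanSpace ℝ (Fin n),
      |g u ω - g v ω| ≤ η ω * ‖u - v‖ := aux_ae_lip g hC1 η hLip
  -- a.e. strong measurability of ω ↦ g (x ω) ω for x ∈ L²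
  have hAESM : ∀ x : Ω → EuclideanSpace ℝ (Fin n), MemLp x 2 μ →
      AEStronglyMeasurable (fun ω => g (x ω) ω) μ := by
    intro x hx
    have hx' : Measurable (hx.1.mk x) := hx.1.stronglyMeasurable_mk.measurable
    refine (aux_meas_comp g hC1 hmeas hx').aestronglyMeasurable.congr ?_
    filter_upwards [hx.1.ae_eq_mk] with ω h
    rw [h]
  -- product of L² functions is integrable
  have hprod : ∀ x : Ω → EuclideanSpace ℝ (Fin n), MemLp x 2 μ →
      Integrable (fun ω => η ω * ‖x ω‖) μ := by
    intro x hx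
    have := (hx.norm).smul hη2 (p := 2) (q := 2) (r := 1)
    simp only [Pi.smul_apply', smul_eq_mul] at this
    exact memLp_one_iff_integrable.1 this
  have part1 : ∀ x : Ω → EuclideanSpace ℝ (Fin n), MemLp x 2 μ →
      Integrable (fun ω => g (x ω) ω) μ := by
    intro x hx
    refine Integrable.mono' ((hg0.norm).add (hprod x hx)) (hAESM x hx) ?_
    filter_upwards [hULip] with ω hω
    have h1 := hω (x ω) 0
    rw [sub_zero] at h1
    have h2 : |g (x ω) ω| - |g 0 ω| ≤ |g (x ω) ω - g 0 ω| := abs_sub_abs_le_abs_sub _ _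
    simp only [Pi.add_apply, Real.norm_eq_abs]
    linarith
  have part2 : ∀ x y : Ω → EuclideanSpace ℝ (Fin n), MemLp x 2 μ → MemLp y 2 μ →
      ∀ t : ℝ, 0 ≤ t → t ≤ 1 →
      (∫ ω, g (t • x ω + (1 - t) • y ω) ω ∂μ) ≤
        t * (∫ ω, g (x ω) ω ∂μ) + (1 - t) * (∫ ω, g (y ω) ω ∂μ) := by
    intro x y hx hy t ht0 ht1
    have hcombo : MemLp (fun ω => t • x ω + (1 - t) • y ω) 2 μ :=
      (hx.const_smul t).add (hy.const_smul (1 - t))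
    have hIx := part1 x hx
    have hIy := part1 y hy
    have hIc := part1 _ hcombo
    have hpt : ∀ ω, g (t • x ω + (1 - t) • y ω) ω ≤ t * g (x ω) ω + (1 - t) * g (y ω) ω := by
      intro ω
      exact (hconv ω).2 (Set.mem_univ (x ω)) (Set.mem_univ (y ω)) ht0 (by linarith) (by ring)
    calc (∫ ω, g (t • x ω + (1 - t) • y ω) ω ∂μ)
        ≤ ∫ ω, (t * g (x ω) ω + (1 - t) * g (y ω) ω) ∂μ := by
          refine integral_mono hIc ((hIx.const_mul t).add (hIy.const_mul (1 - t))) hpt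
      _ = t * (∫ ω, g (x ω) ω ∂μ) + (1 - t) * (∫ ω, g (y ω) ω ∂μ) := by
          rw [integral_add (hIx.const_mul t) (hIy.const_mul (1 - t)),
            integral_const_mul, integral_const_mul]
  have part3 : ∀ x : Ω → EuclideanSpace ℝ (Fin n), MemLp x 2 μ →
      MemLp (fun ω => gradient (fun u => g u ω) (x ω)) 2 μ := by
    intro x hx
    have hx' : Measurable (hx.1.mk x) := hx.1.stronglyMeasurable_mk.measurable
    have haesm : AEStronglyMeasurable (fun ω => gradient (fun u => g u ω) (x ω)) μ := by
      refine (aux_grad_meas g hC1 hmeas hx').aestronglyMeasurable.congr ?_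
      filter_upwards [hx.1.ae_eq_mk] with ω h
      rw [h]
    refine MemLp.of_le hη2 haesm ?_
    filter_upwards [hULip] with ω hω
    have := aux_grad_bound g hω (hηnn ω) (x ω)
    rwa [Real.norm_eq_abs, abs_of_nonneg (hηnn ω)]
  refine ⟨part1, part2, part3, ?_⟩
  intro x d hx hd
  -- pointwise derivative
  have hptlim : ∀ ω, Tendsto (fun t : ℝ => (g (x ω + t • d ω) ω - g (x ω) ω) / t)
      (nhdsWithin 0 (Set.Ioi 0)) (nhds ⟪gradient (fun u => g u ω) (x ω), d ω⟫) := by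
    intro ω
    have hdiff : HasFDerivAt (fun u => g u ω) (fderiv ℝ (fun u => g u ω) (x ω)) (x ω) :=
      ((hC1 ω).differentiable one_ne_zero).differentiableAt.hasFDerivAt
    have hdiff' : HasFDerivAt (fun u => g u ω) (fderiv ℝ (fun u => g u ω) (x ω))
        (x ω + (0:ℝ) • d ω) := by simpa using hdiff
    have hcurve : HasDerivAt (fun t : ℝ => x ω + t • d ω) (d ω) 0 := by
      simpa using ((hasDerivAt_id (0:ℝ)).smul_const (d ω)).const_add (x ω)
    have hcomp : HasDerivAt (fun t : ℝ => g (x ω + t • d ω) ω)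
        (fderiv ℝ (fun u => g u ω) (x ω) (d ω)) 0 := by
      simpa [Function.comp_def] using hdiff'.comp_hasDerivAt 0 hcurve
    have hslope := hasDerivAt_iff_tendsto_slope.1 hcomp
    have hsub : nhdsWithin (0:ℝ) (Set.Ioi 0) ≤ nhdsWithin 0 {(0:ℝ)}ᶜ :=
      nhdsWithin_mono 0 (fun t ht => ne_of_gt ht)
    have h2 := hslope.mono_left hsub
    have hkey : fderiv ℝ (fun u => g u ω) (x ω) (d ω) =
        ⟪gradient (fun u => g u ω) (x ω), d ω⟫ := by
      rw [gradient, InnerProductSpace.toDual_symm_apply]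
    rw [hkey] at h2
    refine h2.congr' ?_
    filter_upwards [self_mem_nhdsWithin] with t ht
    simp [slope_def_field, div_eq_inv_mul]
  -- bound
  have hbound : Integrable (fun ω => η ω * ‖d ω‖) μ := hprod d hd
  -- the quotient functions
  set F : ℝ → Ω → ℝ := fun t ω => (g (x ω + t • d ω) ω - g (x ω) ω) / t with hF
  have hmemxt : ∀ t : ℝ, MemLp (fun ω => x ω + t • d ω) 2 μ :=
    fun t => hx.add (hd.const_smul t)
  have hDCT : Tendsto (fun t : ℝ => ∫ ω, F t ω ∂μ) (nhdsWithin 0 (Set.Ioi 0))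
      (nhds (∫ ω, ⟪gradient (fun u => g u ω) (x ω), d ω⟫ ∂μ)) := by
    refine tendsto_integral_filter_of_dominated_convergence (fun ω => η ω * ‖d ω‖) ?_ ?_ hbound ?_
    · filter_upwards with t
      have := ((hAESM _ (hmemxt t)).sub (hAESM x hx)).mul_const t⁻¹
      simpa [hF, div_eq_mul_inv] using this
    · filter_upwards [self_mem_nhdsWithin] with t ht
      filter_upwards [hULip] with ω hω
      have h1 := hω (x ω + t • d ω) (x ω)
      rw [add_sub_cancel_left] at h1
      rw [hF]
      simp only [Real.norm_eq_abs, abs_div]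
      rw [abs_of_pos (show (0:ℝ) < t from ht), div_le_iff₀ ht]
      calc |g (x ω + t • d ω) ω - g (x ω) ω| ≤ η ω * ‖t • d ω‖ := h1
        _ = η ω * ‖d ω‖ * t := by
            rw [norm_smul, Real.norm_eq_abs, abs_of_pos ht]; ring
    · exact Eventually.of_forall hptlim
  refine hDCT.congr' ?_
  filter_upwards [self_mem_nhdsWithin] with t ht
  rw [hF]
  rw [integral_div]
  rw [integral_sub (part1 _ (hmemxt t)) (part1 x hx)]
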